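/- Let Δ be the standard probability simplex in ℝⁿ (n ≥ 1) and let σ: Δ → ℝ be a concave function that is bounded below (e.g., nonnegative) at every vertex of Δ. Then σ is lower semicontinuous on Δ. -/

import Mathlib

/-- A concave function nonnegative at vertices is nonneg on the simplex. -/
lemma stmt_15_aux (n : ℕ) (σ : (Fin n → ℝ) → ℝ)
    (hconc : ConcaveOn ℝ (stdSimplex ℝ (Fin n)) σ)
    (hvert : ∀ i : Fin n, 0 ≤ σ (Pi.single i 1)) :
    ∀ z ∈ stdSimplex ℝ (Fin n), 0 ≤ σ z := by
  intro z hz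
  have key : (∑ i, z i • σ (Pi.single (M := fun _ => ℝ) i 1)) ≤
      σ (∑ i, z i • Pi.single (M := fun _ => ℝ) i 1) :=
    hconc.le_map_sum (fun i _ => hz.1 i) hz.2 (fun i _ => single_mem_stdSimplex ℝ i)
  have hsum : (∑ i, z i • Pi.single (M := fun _ => ℝ) i 1) = z := by
    funext j
    simp [Finset.sum_apply, Pi.single_apply]
  rw [hsum] at key
  refine le_trans (Finset.sum_nonneg fun i _ => ?_) key
  exact smul_nonneg (hz.1 i) (hvert i)

theorem stmt_15 (n : ℕ) (hn : 1 ≤ n) (σ : (Fin n → ℝ) → ℝ)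
    (hconc : ConcaveOn ℝ (stdSimplex ℝ (Fin n)) σ)
    (hvert : ∀ i : Fin n, 0 ≤ σ (Pi.single i 1)) :
    LowerSemicontinuousOn σ (stdSimplex ℝ (Fin n)) := by
  have hnn := stmt_15_aux n σ hconc hvert
  intro x hx t ht
  -- support minimum δ
  set T : Finset (Fin n) := Finset.univ.filter (fun i => 0 < x i) with hT
  have hTne : T.Nonempty := by
    have h1 : (∑ i, x i) ≠ 0 := by rw [hx.2]; norm_num
    obtain ⟨i, _, hi⟩ := Finset.exists_ne_zero_of_sum_ne_zero h1
    exact ⟨i, by simp [hT, lt_of_le_of_ne (hx.1 i) (Ne.symm hi)]⟩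
  set δ : ℝ := T.inf' hTne x with hδdef
  have hδpos : 0 < δ := by
    obtain ⟨j, hj, hje⟩ := Finset.exists_mem_eq_inf' hTne x
    rw [hδdef, hje]
    exact (Finset.mem_filter.mp hj).2
  have hδle : ∀ i, 0 < x i → δ ≤ x i := by
    intro i hi
    exact Finset.inf'_le x (by simp [hT, hi])
  -- choose r
  set r : ℝ := min ((σ x - t) / (2 * (|σ x| + 1))) (1/2) with hrdef
  have habs : (0:ℝ) < |σ x| + 1 := by positivity
  have hr0 : 0 < r := by
    apply lt_min
    · apply div_pos (by linarith) (by linarith)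
    · norm_num
  have hr1 : r < 1 := lt_of_le_of_lt (min_le_right _ _) (by norm_num)
  have hrk : r * |σ x| < σ x - t := by
    have h1 : r ≤ (σ x - t) / (2 * (|σ x| + 1)) := min_le_left _ _
    have h2 : r * |σ x| ≤ (σ x - t) / (2 * (|σ x| + 1)) * |σ x| :=
      mul_le_mul_of_nonneg_right h1 (abs_nonneg _)
    have h3 : (σ x - t) / (2 * (|σ x| + 1)) * |σ x| < σ x - t := by
      rw [div_mul_eq_mul_div, div_lt_iff₀ (by linarith)]
      have : |σ x| < 2 * (|σ x| + 1) := by linarith [abs_nonneg (σ x)]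
      nlinarith [abs_nonneg (σ x), sub_pos.mpr ht]
    linarith
  set ε : ℝ := δ * r with hεdef
  have hεpos : 0 < ε := mul_pos hδpos hr0
  -- the neighborhood
  have hev : ∀ᶠ y in nhdsWithin x (stdSimplex ℝ (Fin n)), ∀ i, x i - ε < y i := by
    apply Filter.Eventually.filter_mono nhdsWithin_le_nhds
    rw [Filter.eventually_all]
    intro i
    have hmm : Filter.Tendsto (fun y : Fin n → ℝ => y i) (nhds x) (nhds (x i)) :=
      (continuous_apply i).continuousAt
    exact hmm.eventually_const_lt (by linarith)
  filter_upwards [hev, self_mem_nhdsWithin] with y hy hyΔ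
  -- decomposition
  set z : Fin n → ℝ := fun i => (y i - (1 - r) * x i) / r with hzdef
  have hzmem : z ∈ stdSimplex ℝ (Fin n) := by
    constructor
    · intro i
      apply div_nonneg _ hr0.le
      rcases eq_or_lt_of_le (hx.1 i) with h | h
      · have := hyΔ.1 i
        nlinarith
      · have hδi := hδle i h
        have := hy i
        nlinarith
    · have hs : ∑ i, z i = (∑ i, (y i - (1 - r) * x i)) / r := by
        rw [Finset.sum_div]
      rw [hs, Finset.sum_sub_distrib, hyΔ.2, ← Finset.mul_sum, hx.2]
      field_simp
      ring
  have hcomb : (1 - r) • x + r • z = y := by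
    funext i
    simp only [Pi.add_apply, Pi.smul_apply, smul_eq_mul, hzdef]
    field_simp
    ring
  have hineq := hconc.2 hx hzmem (by linarith : (0:ℝ) ≤ 1 - r) hr0.le (by ring)
  rw [hcomb] at hineq
  have hz0 : 0 ≤ σ z := hnn z hzmem
  have : t < (1 - r) * σ x := by
    have := le_abs_self (σ x)
    nlinarith [abs_nonneg (σ x)]
  calc t < (1 - r) * σ x := this
    _ ≤ (1 - r) * σ x + r * σ z := by nlinarith
    _ ≤ σ y := by simpa [smul_eq_mul] using hineq
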